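/- For β > -1, μ > 0, and n ∈ ℕ₀, the modified fractional integral satisfies Î₋^μ { (1+x) P_n^{(μ,1)}(x) } = [(n+1)!/Γ(n+μ+2)] (1+x) P_n^{(0,1+μ)}(x); in particular, if p is a polynomial of degree ≤ N with p(-1) = 0, then Î₋^μ p is a polynomial of degree ≤ N vanishing at x = -1. -/

import Mathlib

open Real Filter Set

/-- Left-sided Riemann–Liouville fractional integral of order `ρ` with base point `a`. -/
noncomputable def fracInt (a ρ : ℝ) (u : ℝ → ℝ) (x : ℝ) : ℝ :=
  (1 / Real.Gamma ρ) * ∫ y in a..x, u y * (x - y) ^ (ρ - 1)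

/-- Left-sided Caputo fractional derivative of order `μ ∈ (k-1,k)` with base point `a`. -/
noncomputable def caputoD (k : ℕ) (μ a : ℝ) (u : ℝ → ℝ) : ℝ → ℝ :=
  fracInt a ((k : ℝ) - μ) (iteratedDeriv k u)

/-- Left-sided Riemann–Liouville fractional derivative of order `μ ∈ (k-1,k)` with base point `a`. -/
noncomputable def rlD (k : ℕ) (μ a : ℝ) (u : ℝ → ℝ) : ℝ → ℝ :=
  iteratedDeriv k (fracInt a ((k : ℝ) - μ) u)

/-- Jacobi polynomial `P_n^{(α,β)}` for general real parameters, via the terminating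
hypergeometric representation. -/
noncomputable def jacobiP (n : ℕ) (α β : ℝ) (x : ℝ) : ℝ :=
  (1 / (n.factorial : ℝ)) * ∑ m ∈ Finset.range (n + 1),
    (n.choose m : ℝ) * (∏ i ∈ Finset.range (n - m), (α + m + 1 + i)) *
    (∏ i ∈ Finset.range m, (α + β + n + 1 + i)) * ((x - 1) / 2) ^ m

/-- Legendre polynomial. -/
noncomputable def legendreP (n : ℕ) (x : ℝ) : ℝ := jacobiP n 0 0 x

noncomputable def fracIntHat (μ : ℝ) (u : ℝ → ℝ) (x : ℝ) : ℝ :=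
  (1 + x) ^ (-μ) * fracInt (-1) μ u x


lemma betaReal (μ : ℝ) (hμ : 0 < μ) (k : ℕ) :
    ∫ t in (0:ℝ)..1, t ^ k * (1 - t) ^ (μ - 1) =
      (k.factorial : ℝ) * Real.Gamma μ / Real.Gamma (k + 1 + μ) := by
  have hpos : (0:ℝ) < (k:ℝ) + 1 + μ := by positivity
  have h1 : Complex.betaIntegral ((k:ℂ) + 1) μ =
      ((∫ t in (0:ℝ)..1, t ^ k * (1 - t) ^ (μ - 1) : ℝ) : ℂ) := by
    rw [Complex.betaIntegral, ← intervalIntegral.integral_ofReal]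
    refine intervalIntegral.integral_congr (fun t ht => ?_)
    rw [uIcc_of_le (by norm_num : (0:ℝ) ≤ 1)] at ht
    push_cast
    rw [Complex.ofReal_cpow (by linarith [ht.2] : (0:ℝ) ≤ 1 - t)]
    push_cast
    rw [add_sub_cancel_right, Complex.cpow_natCast]
  have h2 := Complex.Gamma_mul_Gamma_eq_betaIntegral
    (s := (k:ℂ) + 1) (t := (μ:ℂ)) (by simp; positivity) (by simp [hμ])
  rw [h1] at h2
  have e1 : Complex.Gamma ((k:ℂ) + 1) = (Real.Gamma ((k:ℝ)+1) : ℂ) := by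
    rw [← Complex.Gamma_ofReal]; push_cast; ring_nf
  have e2 : Complex.Gamma ((k:ℂ) + 1 + μ) = (Real.Gamma ((k:ℝ)+1+μ) : ℂ) := by
    rw [← Complex.Gamma_ofReal]; push_cast; ring_nf
  rw [e1, Complex.Gamma_ofReal, e2, ← Complex.ofReal_mul, ← Complex.ofReal_mul] at h2
  have h3 := Complex.ofReal_inj.mp h2
  have hG : Real.Gamma ((k:ℝ) + 1 + μ) ≠ 0 := (Real.Gamma_pos_of_pos hpos).ne'
  rw [Real.Gamma_nat_eq_factorial] at h3
  field_simp
  linarith [h3]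


lemma Jint (μ : ℝ) (hμ : 0 < μ) (k : ℕ) (x : ℝ) :
    IntervalIntegrable (fun y => (1+y)^k * (x-y)^(μ-1)) MeasureTheory.volume (-1) x := by
  have h0 : IntervalIntegrable (fun y : ℝ => y ^ (μ-1)) MeasureTheory.volume (x - (-1)) (x - x) :=
    intervalIntegral.intervalIntegrable_rpow' (by linarith)
  have h1 := h0.comp_sub_left x
  simp only [sub_sub_cancel] at h1
  exact h1.continuousOn_mul (by fun_prop)

lemma Jval (μ : ℝ) (hμ : 0 < μ) (k : ℕ) (x : ℝ) (hx : -1 < x) :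
    ∫ y in (-1:ℝ)..x, (1+y)^k * (x-y)^(μ-1) =
      (k.factorial : ℝ) * Real.Gamma μ / Real.Gamma (k + 1 + μ) * (1+x) ^ ((k:ℝ)+μ) := by
  have hc : (0:ℝ) < 1 + x := by linarith
  have hsub := intervalIntegral.integral_comp_mul_add
    (a := (0:ℝ)) (b := 1) (fun y => (1+y)^k * (x-y)^(μ-1)) (hc.ne') (-1)
  simp only [mul_zero, zero_add, mul_one] at hsub
  have hends : (1 + x) * 0 + -1 = (-1:ℝ) := by ring
  rw [show (1:ℝ)+x+-1 = x by ring] at hsub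
  have key : (∫ t in (0:ℝ)..1, (1 + ((1+x) * t + -1))^k * (x - ((1+x) * t + -1))^(μ-1))
      = (1+x)^k * ((1+x)^(μ-1)) * ∫ t in (0:ℝ)..1, t ^ k * (1 - t) ^ (μ - 1) := by
    rw [← intervalIntegral.integral_const_mul]
    refine intervalIntegral.integral_congr (fun t ht => ?_)
    rw [uIcc_of_le (by norm_num : (0:ℝ) ≤ 1)] at ht
    have e1 : 1 + ((1+x) * t + -1) = (1+x) * t := by ring
    have e2 : x - ((1+x) * t + -1) = (1+x) * (1 - t) := by ring
    rw [e1, e2, mul_pow, Real.mul_rpow hc.le (by linarith [ht.2])]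
    ring
  rw [key, betaReal μ hμ k] at hsub
  have : (∫ y in (-1:ℝ)..x, (1+y)^k * (x-y)^(μ-1))
      = (1+x) * ((1+x)^k * ((1+x)^(μ-1)) * ((k.factorial : ℝ) * Real.Gamma μ / Real.Gamma (k + 1 + μ))) := by
    rw [smul_eq_mul] at hsub
    field_simp at hsub ⊢
    linarith [hsub]
  rw [this]
  rw [show ((k:ℝ)+μ) = (k:ℝ) + 1 + (μ - 1) by ring, Real.rpow_add hc, Real.rpow_add hc,
    Real.rpow_natCast, Real.rpow_one]
  ring

noncomputable def cc (μ : ℝ) (k : ℕ) : ℝ := (k.factorial : ℝ) / Real.Gamma (k + 1 + μ)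

lemma fracIntHat_sum {ι : Type*} (μ : ℝ) (hμ : 0 < μ) (s : Finset ι) (f : ι → ℝ) (e : ι → ℕ)
    (x : ℝ) (hx : -1 < x) :
    fracIntHat μ (fun y => ∑ i ∈ s, f i * (1+y)^(e i)) x
      = ∑ i ∈ s, f i * cc μ (e i) * (1+x)^(e i) := by
  have hc : (0:ℝ) < 1 + x := by linarith
  unfold fracIntHat fracInt
  have h1 : (∫ y in (-1:ℝ)..x, (∑ i ∈ s, f i * (1+y)^(e i)) * (x-y)^(μ-1))
      = ∑ i ∈ s, f i * (((e i).factorial : ℝ) * Real.Gamma μ / Real.Gamma (e i + 1 + μ) * (1+x)^((e i : ℝ)+μ)) := by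
    rw [show (fun y => (∑ i ∈ s, f i * (1+y)^(e i)) * (x-y)^(μ-1))
        = fun y => ∑ i ∈ s, f i * ((1+y)^(e i) * (x-y)^(μ-1)) from funext fun y => by
      rw [Finset.sum_mul]; exact Finset.sum_congr rfl fun i _ => by ring]
    rw [intervalIntegral.integral_finset_sum (fun i _ => ((Jint μ hμ (e i) x).const_mul (f i)))]
    exact Finset.sum_congr rfl fun i _ => by
      rw [intervalIntegral.integral_const_mul, Jval μ hμ _ x hx]
  rw [h1, Finset.mul_sum, Finset.mul_sum]
  refine Finset.sum_congr rfl fun i _ => ?_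
  have hγ : Real.Gamma μ ≠ 0 := (Real.Gamma_pos_of_pos hμ).ne'
  have hsplit : (1+x) ^ ((e i : ℝ)+μ) = (1+x)^(e i) * (1+x)^μ := by
    rw [Real.rpow_add hc, Real.rpow_natCast]
  have hne : (1+x) ^ (-μ) * (1+x) ^ μ = 1 := by
    rw [← Real.rpow_add hc]; simp
  rw [hsplit, cc]
  have h2 : Real.Gamma μ / Real.Gamma μ = 1 := div_self hγ
  calc (1+x) ^ (-μ) * (1 / Real.Gamma μ *
        (f i * (((e i).factorial : ℝ) * Real.Gamma μ / Real.Gamma (e i + 1 + μ) * ((1+x)^(e i) * (1+x)^μ))))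
      = ((1+x)^(-μ) * (1+x)^μ) * (Real.Gamma μ / Real.Gamma μ)
          * (f i * (((e i).factorial : ℝ) / Real.Gamma (e i + 1 + μ)) * (1+x)^(e i)) := by ring
    _ = f i * (((e i).factorial : ℝ) / Real.Gamma (↑(e i) + 1 + μ)) * (1+x)^(e i) := by
        rw [hne, h2]; ring

lemma pascalStep (K : ℕ) (T : ℕ → ℝ) :
    ∑ s ∈ Finset.range (K+2), (-1:ℝ)^s * ((K+1).choose s) * T s
      = ∑ s ∈ Finset.range (K+1), (-1:ℝ)^s * (K.choose s) * (T s - T (s+1)) := by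
  have hS : ∑ s ∈ Finset.range (K+1), (-1:ℝ)^s * (K.choose s) * (T s - T (s+1))
      = (∑ s ∈ Finset.range (K+1), (-1:ℝ)^s * (K.choose s) * T s)
        - ∑ s ∈ Finset.range (K+1), (-1:ℝ)^s * (K.choose s) * T (s+1) := by
    rw [← Finset.sum_sub_distrib]
    exact Finset.sum_congr rfl fun s _ => by ring
  rw [hS]
  rw [Finset.sum_range_succ' (fun s => (-1:ℝ)^s * ((K+1).choose s) * T s) (K+1)]
  have h1 : ∀ s, (-1:ℝ)^(s+1) * ((K+1).choose (s+1)) * T (s+1)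
      = -((-1:ℝ)^s * (K.choose s) * T (s+1)) + (-1:ℝ)^(s+1) * (K.choose (s+1)) * T (s+1) := by
    intro s
    rw [Nat.choose_succ_succ]
    push_cast
    ring
  rw [Finset.sum_congr rfl (fun s _ => h1 s), Finset.sum_add_distrib]
  have h2 : ∑ s ∈ Finset.range (K+1), (-1:ℝ)^(s+1) * (K.choose (s+1)) * T (s+1)
      = (∑ s ∈ Finset.range (K+1), (-1:ℝ)^s * (K.choose s) * T s) - T 0 := by
    rw [Finset.sum_range_succ, Nat.choose_succ_self,
      Finset.sum_range_succ' (fun s => (-1:ℝ)^s * (K.choose s) * T s) K]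
    simp
  rw [h2, Finset.sum_neg_distrib]
  simp only [pow_zero, Nat.choose_zero_right, Nat.cast_one, one_mul, mul_one]
  ring

lemma prodDiff (M : ℕ) (w : ℝ) :
    (∏ i ∈ Finset.range (M+1), (w+i)) - ∏ i ∈ Finset.range (M+1), (w+1+i)
      = -((M:ℝ)+1) * ∏ i ∈ Finset.range M, (w+1+i) := by
  rw [Finset.prod_range_succ' (fun i => w + i) M, Finset.prod_range_succ]
  push_cast
  have : ∀ i ∈ Finset.range M, w + ((i:ℝ)+1) = w + 1 + i := fun i _ => by ring
  rw [Finset.prod_congr rfl this]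
  ring

lemma identA : ∀ (K : ℕ) (D : ℕ) (z : ℝ), K ≤ D →
    ∑ s ∈ Finset.range (K+1), (-1:ℝ)^s * (K.choose s) * ∏ i ∈ Finset.range D, (z+s+i)
      = (-1:ℝ)^K * (∏ i ∈ Finset.range K, ((D:ℝ)-i)) * ∏ i ∈ Finset.range (D-K), (z+K+i) := by
  intro K
  induction K with
  | zero => intro D z _; simp
  | succ K ih =>
    intro D z hKD
    obtain ⟨M, rfl⟩ : ∃ M, D = M + 1 := ⟨D - 1, by omega⟩
    rw [pascalStep K (fun s => ∏ i ∈ Finset.range (M+1), (z+s+i))]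
    have key : ∀ s : ℕ, (∏ i ∈ Finset.range (M+1), (z+s+i)) - (∏ i ∈ Finset.range (M+1), (z+(s+1:ℕ)+i))
        = -((M:ℝ)+1) * ∏ i ∈ Finset.range M, ((z+1)+s+i) := by
      intro s
      have := prodDiff M (z+s)
      push_cast at this ⊢
      rw [Finset.prod_congr rfl (fun i (_ : i ∈ Finset.range (M+1)) =>
            show z+((s:ℝ)+1)+i = z+s+1+i by ring),
          Finset.prod_congr rfl (fun i (_ : i ∈ Finset.range M) =>
            show z+1+(s:ℝ)+i = z+s+1+i by ring)]
      exact this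
    rw [Finset.sum_congr rfl (fun s _ => by rw [key s])]
    have hKM : K ≤ M := by omega
    have pull : ∑ s ∈ Finset.range (K+1), (-1:ℝ)^s * (K.choose s) *
          (-((M:ℝ)+1) * ∏ i ∈ Finset.range M, ((z+1)+s+i))
        = -((M:ℝ)+1) * ∑ s ∈ Finset.range (K+1), (-1:ℝ)^s * (K.choose s) *
          ∏ i ∈ Finset.range M, ((z+1)+s+i) := by
      rw [Finset.mul_sum]
      exact Finset.sum_congr rfl fun s _ => by ring
    rw [pull, ih M (z+1) hKM]
    have e1 : M - K = M + 1 - (K+1) := by omega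
    have e2 : ∀ i ∈ Finset.range (M+1-(K+1)), z+1+(K:ℝ)+i = z+((K:ℕ)+1:ℕ)+i := by
      intro i _; push_cast; ring
    have e3 : ∏ i ∈ Finset.range (K+1), (((M+1:ℕ):ℝ)-(i:ℝ))
        = (∏ i ∈ Finset.range K, ((M:ℝ)-i)) * ((M:ℝ)+1) := by
      rw [Finset.prod_range_succ' (fun i => ((M+1:ℕ):ℝ)-(i:ℝ)) K]
      push_cast
      rw [Finset.prod_congr rfl (fun i (_ : i ∈ Finset.range K) =>
        show (M:ℝ)+1-((i:ℝ)+1) = (M:ℝ)-i by ring)]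
      norm_num
    rw [e1, Finset.prod_congr rfl e2] at *
    rw [e3]
    push_cast
    ring


lemma identB : ∀ (K : ℕ) (c d : ℝ),
    ∑ s ∈ Finset.range (K+1), (-1:ℝ)^s * (K.choose s) *
        ((∏ i ∈ Finset.range (K-s), (c+s+i)) * ∏ i ∈ Finset.range s, (d+i))
      = ∏ i ∈ Finset.range K, (c+i-d) := by
  intro K
  induction K with
  | zero => intro c d; simp
  | succ K ih =>
    intro c d
    rw [show K+1+1 = K+2 from rfl,
      pascalStep K (fun s => (∏ i ∈ Finset.range (K+1-s), (c+s+i)) * ∏ i ∈ Finset.range s, (d+i))]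
    have key : ∀ s ∈ Finset.range (K+1),
        (-1:ℝ)^s * (K.choose s) *
          (((∏ i ∈ Finset.range (K+1-s), (c+s+i)) * ∏ i ∈ Finset.range s, (d+i))
            - (∏ i ∈ Finset.range (K+1-(s+1)), (c+(s+1:ℕ)+i)) * ∏ i ∈ Finset.range (s+1), (d+i))
        = (c-d) * ((-1:ℝ)^s * (K.choose s) *
            ((∏ i ∈ Finset.range (K-s), ((c+1)+s+i)) * ∏ i ∈ Finset.range s, (d+i))) := by
      intro s hs
      have hsK : s ≤ K := by simpa [Nat.lt_succ_iff] using Finset.mem_range.mp hs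
      have hKs : K + 1 - s = (K - s) + 1 := by omega
      have hKs2 : K + 1 - (s+1) = K - s := by omega
      rw [hKs, hKs2, Finset.prod_range_succ' (fun i => c+s+i) (K-s), Finset.prod_range_succ]
      have c1 : ∀ i ∈ Finset.range (K-s), c+(s:ℝ)+((i+1:ℕ):ℝ) = (c+1)+s+i := fun i _ => by
        push_cast; ring
      have c2 : ∀ i ∈ Finset.range (K-s), c+((s+1:ℕ):ℝ)+(i:ℝ) = (c+1)+s+i := fun i _ => by
        push_cast; ring
      rw [Finset.prod_congr rfl c1, Finset.prod_congr rfl c2]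
      push_cast
      ring
    rw [Finset.sum_congr rfl key, ← Finset.mul_sum, ih (c+1) d,
      Finset.prod_range_succ' (fun i => c+i-d) K]
    have c3 : ∀ i ∈ Finset.range K, c+1+(i:ℝ)-d = c+((i:ℝ)+1)-d := fun i _ => by ring
    rw [Finset.prod_congr rfl c3]
    push_cast
    ring

lemma prodSplit (μ : ℝ) (n m : ℕ) (hm : m ≤ n) :
    ∏ i ∈ Finset.range (n+1), (μ+(m:ℝ)+1+i)
      = (∏ i ∈ Finset.range (n-m), (μ+m+1+i)) * (μ+n+1) * ∏ i ∈ Finset.range m, (μ+n+2+i) := by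
  have h : n + 1 = (n-m) + (m+1) := by omega
  rw [h, Finset.prod_range_add]
  have e : ∏ i ∈ Finset.range (m+1), (μ+(m:ℝ)+1+((n-m+i:ℕ):ℝ))
      = (μ+(n:ℝ)+1) * ∏ i ∈ Finset.range m, (μ+(n:ℝ)+2+i) := by
    rw [Finset.prod_range_succ' (fun i => μ+(m:ℝ)+1+((n-m+i:ℕ):ℝ)) m]
    have c1 : ∀ i ∈ Finset.range m, μ+(m:ℝ)+1+((n-m+(i+1):ℕ):ℝ) = μ+(n:ℝ)+2+i := by
      intro i _
      push_cast [Nat.cast_sub hm]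
      ring
    rw [Finset.prod_congr rfl c1]
    push_cast [Nat.cast_sub hm]
    ring
  rw [e]
  ring

lemma GammaProd (z : ℝ) (hz : 0 < z) : ∀ K : ℕ,
    Real.Gamma (z + K) = Real.Gamma z * ∏ i ∈ Finset.range K, (z+i) := by
  intro K
  induction K with
  | zero => simp
  | succ K ih =>
    have h1 : z + ((K:ℝ)+1) = (z + K) + 1 := by ring
    push_cast
    rw [h1, Real.Gamma_add_one (by positivity), ih, Finset.prod_range_succ]
    ring

lemma revProd : ∀ (K : ℕ) (v : ℝ),
    ∏ i ∈ Finset.range K, (v - i) = ∏ i ∈ Finset.range K, (v - K + 1 + i) := by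
  intro K
  induction K with
  | zero => intro v; simp
  | succ K ih =>
    intro v
    rw [Finset.prod_range_succ, ih v,
      Finset.prod_range_succ' (fun i => v - ((K:ℕ)+1:ℕ) + 1 + i) K]
    push_cast
    rw [Finset.prod_congr rfl (fun i (_ : i ∈ Finset.range K) =>
      show v-((K:ℝ)+1)+1+((i:ℝ)+1) = v-K+1+i by ring)]
    ring

lemma factProd : ∀ (b a : ℕ), (a.factorial : ℝ) * ∏ i ∈ Finset.range b, ((a:ℝ)+1+i)
    = ((a+b).factorial : ℝ) := by
  intro b
  induction b with
  | zero => intro a; simp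
  | succ b ih =>
    intro a
    rw [Finset.prod_range_succ, ← mul_assoc, ih a, show a + (b+1) = (a+b) + 1 by omega,
      Nat.factorial_succ]
    push_cast
    ring

lemma signProd (j n : ℕ) (μ : ℝ) (hj : j ≤ n) :
    ∏ i ∈ Finset.range (n-j), ((j:ℝ)+1+i-(μ+(n:ℝ)+(j:ℝ)+2))
      = (-1:ℝ)^(n-j) * ∏ i ∈ Finset.range (n-j), (μ+(j:ℝ)+2+i) := by
  have h1 : ∀ i ∈ Finset.range (n-j), (j:ℝ)+1+i-(μ+(n:ℝ)+(j:ℝ)+2) = -((μ+(n:ℝ)+1) - i) :=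
    fun i _ => by ring
  rw [Finset.prod_congr rfl h1,
    Finset.prod_congr rfl (fun i (_ : i ∈ Finset.range (n-j)) =>
      (neg_one_mul ((μ+(n:ℝ)+1) - i)).symm),
    Finset.prod_mul_distrib, Finset.prod_const, Finset.card_range]
  have h2 := revProd (n-j) (μ+(n:ℝ)+1)
  have h3 : ∀ i ∈ Finset.range (n-j), μ+(n:ℝ)+1-((n-j:ℕ):ℝ)+1+(i:ℝ) = μ+(j:ℝ)+2+i := by
    intro i _
    rw [Nat.cast_sub hj]
    ring
  rw [h2, Finset.prod_congr rfl h3]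


lemma SAval (μ : ℝ) (hμ : 0 < μ) (n j : ℕ) (hj : j ≤ n) :
    ∑ m ∈ Finset.Ico j (n+1), ((n.choose m):ℝ) * (∏ i ∈ Finset.range (n-m), (μ+(m:ℝ)+1+i)) *
        (∏ i ∈ Finset.range m, (μ+(n:ℝ)+2+i)) * ((-1:ℝ)^(j+m) * ((m.choose j):ℝ))
      = (-1:ℝ)^(n-j) * ((n.choose j):ℝ) * (∏ i ∈ Finset.range (n-j), ((n:ℝ)+1-i)) *
        ∏ i ∈ Finset.range j, (μ+(n:ℝ)+2+i) := by
  have hμn : (0:ℝ) < μ+(n:ℝ)+1 := by positivity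
  rw [Finset.sum_Ico_eq_sum_range]
  rw [show n+1-j = (n-j)+1 by omega]
  have key : ∀ s ∈ Finset.range ((n-j)+1),
      ((n.choose (j+s)):ℝ) * (∏ i ∈ Finset.range (n-(j+s)), (μ+((j+s:ℕ):ℝ)+1+i)) *
        (∏ i ∈ Finset.range (j+s), (μ+(n:ℝ)+2+i)) * ((-1:ℝ)^(j+(j+s)) * (((j+s).choose j):ℝ))
      = (((n.choose j):ℝ) / (μ+(n:ℝ)+1)) *
        ((-1:ℝ)^s * (((n-j).choose s):ℝ) * ∏ i ∈ Finset.range (n+1), ((μ+(j:ℝ)+1)+s+i)) := by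
    intro s hs
    have hsK : s ≤ n - j := by simpa [Nat.lt_succ_iff] using Finset.mem_range.mp hs
    have hjs : j + s ≤ n := by omega
    have hcc : ((n.choose (j+s)):ℝ) * (((j+s).choose j):ℝ)
        = ((n.choose j):ℝ) * (((n-j).choose s):ℝ) := by
      have := Nat.choose_mul (n := n) (Nat.le_add_right j s)
      rw [show j + s - j = s by omega] at this
      exact_mod_cast congrArg (Nat.cast (R := ℝ)) this
    have hsign : (-1:ℝ)^(j+(j+s)) = (-1:ℝ)^s := by
      rw [show j+(j+s) = 2*j+s by omega, pow_add, pow_mul]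
      norm_num
    have hps := prodSplit μ n (j+s) hjs
    have hpp : (∏ i ∈ Finset.range (n-(j+s)), (μ+((j+s:ℕ):ℝ)+1+i)) *
        ∏ i ∈ Finset.range (j+s), (μ+(n:ℝ)+2+i)
        = (∏ i ∈ Finset.range (n+1), ((μ+(j:ℝ)+1)+s+i)) / (μ+(n:ℝ)+1) := by
      rw [Finset.prod_congr rfl (fun i (_ : i ∈ Finset.range (n+1)) =>
        show (μ+(j:ℝ)+1)+s+i = μ+((j+s:ℕ):ℝ)+1+i by push_cast; ring), hps]
      field_simp
    calc ((n.choose (j+s)):ℝ) * (∏ i ∈ Finset.range (n-(j+s)), (μ+((j+s:ℕ):ℝ)+1+i)) *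
        (∏ i ∈ Finset.range (j+s), (μ+(n:ℝ)+2+i)) * ((-1:ℝ)^(j+(j+s)) * (((j+s).choose j):ℝ))
        = (((n.choose (j+s)):ℝ) * (((j+s).choose j):ℝ)) * ((-1:ℝ)^(j+(j+s))) *
          ((∏ i ∈ Finset.range (n-(j+s)), (μ+((j+s:ℕ):ℝ)+1+i)) *
            ∏ i ∈ Finset.range (j+s), (μ+(n:ℝ)+2+i)) := by ring
      _ = _ := by rw [hcc, hsign, hpp]; ring
  rw [Finset.sum_congr rfl key, ← Finset.mul_sum, identA (n-j) (n+1) (μ+(j:ℝ)+1) (by omega)]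
  have e1 : ∏ i ∈ Finset.range (n-j), ((((n+1:ℕ)):ℝ)-(i:ℝ)) = ∏ i ∈ Finset.range (n-j), ((n:ℝ)+1-(i:ℝ)) :=
    Finset.prod_congr rfl (fun i _ => by push_cast; ring)
  have e2 : ∏ i ∈ Finset.range (n+1-(n-j)), ((μ+(j:ℝ)+1)+((n-j:ℕ):ℝ)+i)
      = (∏ i ∈ Finset.range j, (μ+(n:ℝ)+2+i)) * (μ+(n:ℝ)+1) := by
    rw [show n+1-(n-j) = j+1 by omega,
      Finset.prod_range_succ' (fun i => (μ+(j:ℝ)+1)+((n-j:ℕ):ℝ)+i) j]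
    rw [Finset.prod_congr rfl (fun i (_ : i ∈ Finset.range j) =>
      show (μ+(j:ℝ)+1)+((n-j:ℕ):ℝ)+((i+1:ℕ):ℝ) = μ+(n:ℝ)+2+i by
        push_cast [Nat.cast_sub hj]; ring)]
    push_cast [Nat.cast_sub hj]
    ring
  rw [e2, e1]
  field_simp

lemma SBval (μ : ℝ) (n j : ℕ) (hj : j ≤ n) :
    ∑ m ∈ Finset.Ico j (n+1), ((n.choose m):ℝ) * (∏ i ∈ Finset.range (n-m), ((m:ℝ)+1+i)) *
        (∏ i ∈ Finset.range m, (μ+(n:ℝ)+2+i)) * ((-1:ℝ)^(j+m) * ((m.choose j):ℝ))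
      = ((n.choose j):ℝ) * (∏ i ∈ Finset.range j, (μ+(n:ℝ)+2+i)) *
        ∏ i ∈ Finset.range (n-j), (((j:ℝ)+1)+i-(μ+(n:ℝ)+(j:ℝ)+2)) := by
  rw [Finset.sum_Ico_eq_sum_range]
  rw [show n+1-j = (n-j)+1 by omega]
  have key : ∀ s ∈ Finset.range ((n-j)+1),
      ((n.choose (j+s)):ℝ) * (∏ i ∈ Finset.range (n-(j+s)), (((j+s:ℕ):ℝ)+1+i)) *
        (∏ i ∈ Finset.range (j+s), (μ+(n:ℝ)+2+i)) * ((-1:ℝ)^(j+(j+s)) * (((j+s).choose j):ℝ))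
      = (((n.choose j):ℝ) * ∏ i ∈ Finset.range j, (μ+(n:ℝ)+2+i)) *
        ((-1:ℝ)^s * (((n-j).choose s):ℝ) *
          ((∏ i ∈ Finset.range ((n-j)-s), (((j:ℝ)+1)+s+i)) *
            ∏ i ∈ Finset.range s, ((μ+(n:ℝ)+(j:ℝ)+2)+i))) := by
    intro s hs
    have hsK : s ≤ n - j := by simpa [Nat.lt_succ_iff] using Finset.mem_range.mp hs
    have hjs : j + s ≤ n := by omega
    have hcc : ((n.choose (j+s)):ℝ) * (((j+s).choose j):ℝ)
        = ((n.choose j):ℝ) * (((n-j).choose s):ℝ) := by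
      have := Nat.choose_mul (n := n) (Nat.le_add_right j s)
      rw [show j + s - j = s by omega] at this
      exact_mod_cast congrArg (Nat.cast (R := ℝ)) this
    have hsign : (-1:ℝ)^(j+(j+s)) = (-1:ℝ)^s := by
      rw [show j+(j+s) = 2*j+s by omega, pow_add, pow_mul]
      norm_num
    have hp1 : ∏ i ∈ Finset.range (n-(j+s)), (((j+s:ℕ):ℝ)+1+i)
        = ∏ i ∈ Finset.range ((n-j)-s), (((j:ℝ)+1)+s+i) := by
      rw [show n-(j+s) = (n-j)-s by omega]
      exact Finset.prod_congr rfl (fun i _ => by push_cast; ring)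
    have hp2 : ∏ i ∈ Finset.range (j+s), (μ+(n:ℝ)+2+i)
        = (∏ i ∈ Finset.range j, (μ+(n:ℝ)+2+i)) *
          ∏ i ∈ Finset.range s, ((μ+(n:ℝ)+(j:ℝ)+2)+i) := by
      rw [Finset.prod_range_add (fun i => μ+(n:ℝ)+2+(i:ℝ)) j s]
      congr 1
      exact Finset.prod_congr rfl (fun i _ => by push_cast; ring)
    rw [hp1, hp2, hsign]
    calc ((n.choose (j+s)):ℝ) * (∏ i ∈ Finset.range ((n-j)-s), (((j:ℝ)+1)+s+i)) *
          ((∏ i ∈ Finset.range j, (μ+(n:ℝ)+2+i)) *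
            ∏ i ∈ Finset.range s, ((μ+(n:ℝ)+(j:ℝ)+2)+i)) * ((-1:ℝ)^s * (((j+s).choose j):ℝ))
        = (((n.choose (j+s)):ℝ) * (((j+s).choose j):ℝ)) * ((-1:ℝ)^s) *
          ((∏ i ∈ Finset.range ((n-j)-s), (((j:ℝ)+1)+s+i)) *
            ((∏ i ∈ Finset.range j, (μ+(n:ℝ)+2+i)) *
              ∏ i ∈ Finset.range s, ((μ+(n:ℝ)+(j:ℝ)+2)+i))) := by ring
      _ = _ := by rw [hcc]; ring
  rw [Finset.sum_congr rfl key, ← Finset.mul_sum, identB (n-j) ((j:ℝ)+1) (μ+(n:ℝ)+(j:ℝ)+2)]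

lemma swapTriangle (n : ℕ) (G : ℕ → ℕ → ℝ) :
    ∑ m ∈ Finset.range (n+1), ∑ j ∈ Finset.range (m+1), G m j
      = ∑ j ∈ Finset.range (n+1), ∑ m ∈ Finset.Ico j (n+1), G m j := by
  simp_rw [Finset.range_eq_Ico]
  exact (Finset.sum_Ico_Ico_comm 0 (n+1) (fun j m => G m j)).symm

lemma binomStep (m : ℕ) (x : ℝ) :
    (1+x) * ((x-1)/2)^m
      = ∑ j ∈ Finset.range (m+1), ((-1:ℝ)^(j+m) * ((m.choose j):ℝ) * (1/2)^j) * (1+x)^(j+1) := by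
  rw [show (x-1)/2 = (1+x)/2 - 1 by ring, sub_pow, Finset.mul_sum]
  refine Finset.sum_congr rfl fun j _ => ?_
  rw [div_pow, one_pow]
  simp only [one_div, inv_pow]
  ring

lemma jacobiExpand (n : ℕ) (α β : ℝ) (x : ℝ) :
    (1+x) * jacobiP n α β x
      = ∑ j ∈ Finset.range (n+1), ((1/(n.factorial:ℝ)) * (1/2)^j *
          ∑ m ∈ Finset.Ico j (n+1), ((n.choose m):ℝ) *
            (∏ i ∈ Finset.range (n-m), (α+(m:ℝ)+1+i)) *
            (∏ i ∈ Finset.range m, (α+β+(n:ℝ)+1+i)) * ((-1:ℝ)^(j+m) * ((m.choose j):ℝ)))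
          * (1+x)^(j+1) := by
  unfold jacobiP
  have step1 : (1+x) * ((1/(n.factorial:ℝ)) * ∑ m ∈ Finset.range (n+1),
        (n.choose m : ℝ) * (∏ i ∈ Finset.range (n - m), (α + m + 1 + i)) *
        (∏ i ∈ Finset.range m, (α + β + n + 1 + i)) * ((x - 1) / 2) ^ m)
      = ∑ m ∈ Finset.range (n+1), ∑ j ∈ Finset.range (m+1),
          (1/(n.factorial:ℝ)) * ((n.choose m : ℝ) * (∏ i ∈ Finset.range (n - m), (α + m + 1 + i)) *
            (∏ i ∈ Finset.range m, (α + β + n + 1 + i)) *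
            (((-1:ℝ)^(j+m) * ((m.choose j):ℝ) * (1/2)^j) * (1+x)^(j+1))) := by
    rw [Finset.mul_sum, Finset.mul_sum]
    refine Finset.sum_congr rfl fun m _ => ?_
    have : (1+x) * ((1/(n.factorial:ℝ)) * ((n.choose m : ℝ) *
          (∏ i ∈ Finset.range (n - m), (α + m + 1 + i)) *
          (∏ i ∈ Finset.range m, (α + β + n + 1 + i)) * ((x - 1) / 2) ^ m))
        = (1/(n.factorial:ℝ)) * ((n.choose m : ℝ) *
          (∏ i ∈ Finset.range (n - m), (α + m + 1 + i)) *
          (∏ i ∈ Finset.range m, (α + β + n + 1 + i)) * ((1+x) * ((x - 1) / 2) ^ m)) := by ring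
    rw [this, binomStep, Finset.mul_sum, Finset.mul_sum]
  rw [step1, swapTriangle]
  refine Finset.sum_congr rfl fun j _ => ?_
  simp only [Finset.sum_mul, Finset.mul_sum]
  refine Finset.sum_congr rfl fun m _ => by ring
lemma perJ (μ : ℝ) (hμ : 0 < μ) (n j : ℕ) (hj : j ≤ n) :
    (∏ i ∈ Finset.range (n-j), ((n:ℝ)+1-(i:ℝ))) * cc μ (j+1)
      = (((n+1).factorial : ℝ) / Real.Gamma ((n:ℝ) + μ + 2)) *
        ∏ i ∈ Finset.range (n-j), (μ+(j:ℝ)+2+i) := by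
  have hz : (0:ℝ) < μ + (j:ℝ) + 2 := by positivity
  have hQpos : (0:ℝ) < ∏ i ∈ Finset.range (n-j), (μ+(j:ℝ)+2+i) := by
    apply Finset.prod_pos; intro i _; positivity
  have hG1 : Real.Gamma ((n:ℝ) + μ + 2)
      = Real.Gamma (μ+(j:ℝ)+2) * ∏ i ∈ Finset.range (n-j), (μ+(j:ℝ)+2+i) := by
    have := GammaProd (μ+(j:ℝ)+2) hz (n-j)
    rw [show μ+(j:ℝ)+2+((n-j:ℕ):ℝ) = (n:ℝ) + μ + 2 by rw [Nat.cast_sub hj]; ring] at this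
    exact this
  have hP1 : ∏ i ∈ Finset.range (n-j), ((n:ℝ)+1-(i:ℝ))
      = ∏ i ∈ Finset.range (n-j), ((j:ℝ)+2+(i:ℝ)) := by
    rw [revProd (n-j) ((n:ℝ)+1)]
    refine Finset.prod_congr rfl fun i _ => ?_
    rw [Nat.cast_sub hj]
    push_cast
    ring
  have hP2 : ((j+1).factorial : ℝ) * ∏ i ∈ Finset.range (n-j), ((j:ℝ)+2+(i:ℝ))
      = ((n+1).factorial : ℝ) := by
    have h := factProd (n-j) (j+1)
    rw [show j+1+(n-j) = n+1 by omega] at h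
    rw [Finset.prod_congr rfl (fun i (_ : i ∈ Finset.range (n-j)) =>
      show ((j+1:ℕ):ℝ)+1+(i:ℝ) = (j:ℝ)+2+(i:ℝ) by push_cast; ring)] at h
    exact h
  have hcc : cc μ (j+1) = ((j+1).factorial : ℝ) / Real.Gamma (μ+(j:ℝ)+2) := by
    unfold cc
    rw [show ((j+1:ℕ):ℝ)+1+μ = μ+(j:ℝ)+2 by push_cast; ring]
  have hGne : Real.Gamma (μ+(j:ℝ)+2) ≠ 0 := (Real.Gamma_pos_of_pos hz).ne'
  rw [hP1, hcc, hG1, ← hP2]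
  have hAne : (∏ i ∈ Finset.range (n-j), ((j:ℝ)+2+(i:ℝ))) ≠ 0 := by
    refine ne_of_gt (Finset.prod_pos fun i _ => by positivity)
  field_simp

theorem stmt13 (μ : ℝ) (hμ : 0 < μ) :
    (∀ n : ℕ, ∀ x ∈ Set.Ioo (-1 : ℝ) 1,
      fracIntHat μ (fun y => (1 + y) * jacobiP n μ 1 y) x
        = ((n + 1).factorial : ℝ) / Real.Gamma (n + μ + 2) * (1 + x) * jacobiP n 0 (1 + μ) x) ∧
    (∀ N : ℕ, ∀ p : Polynomial ℝ, p.natDegree ≤ N → p.eval (-1) = 0 →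
      ∃ q : Polynomial ℝ, q.natDegree ≤ N ∧ q.eval (-1) = 0 ∧
        ∀ x ∈ Set.Ioo (-1 : ℝ) 1, fracIntHat μ (fun y => p.eval y) x = q.eval x) := by
  constructor
  · intro n x hx
    have hx1 : -1 < x := hx.1
    have hu : (fun y => (1 + y) * jacobiP n μ 1 y)
        = fun y => ∑ j ∈ Finset.range (n+1), ((1/(n.factorial:ℝ)) * (1/2)^j *
            ∑ m ∈ Finset.Ico j (n+1), ((n.choose m):ℝ) *
              (∏ i ∈ Finset.range (n-m), (μ+(m:ℝ)+1+i)) *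
              (∏ i ∈ Finset.range m, (μ+1+(n:ℝ)+1+i)) * ((-1:ℝ)^(j+m) * ((m.choose j):ℝ)))
            * (1+y)^(j+1) := funext fun y => jacobiExpand n μ 1 y
    rw [hu, fracIntHat_sum μ hμ (Finset.range (n+1)) _ (fun j => j+1) x hx1]
    rw [mul_assoc, jacobiExpand n 0 (1+μ) x, Finset.mul_sum]
    refine Finset.sum_congr rfl fun j hj => ?_
    have hjn : j ≤ n := by
      have := Finset.mem_range.mp hj; omega
    have eA : ∑ m ∈ Finset.Ico j (n+1), ((n.choose m):ℝ) *
          (∏ i ∈ Finset.range (n-m), (μ+(m:ℝ)+1+i)) *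
          (∏ i ∈ Finset.range m, (μ+1+(n:ℝ)+1+i)) * ((-1:ℝ)^(j+m) * ((m.choose j):ℝ))
        = ∑ m ∈ Finset.Ico j (n+1), ((n.choose m):ℝ) *
          (∏ i ∈ Finset.range (n-m), (μ+(m:ℝ)+1+i)) *
          (∏ i ∈ Finset.range m, (μ+(n:ℝ)+2+i)) * ((-1:ℝ)^(j+m) * ((m.choose j):ℝ)) := by
      refine Finset.sum_congr rfl fun m _ => ?_
      rw [Finset.prod_congr rfl (fun i (_ : i ∈ Finset.range m) =>
        show μ+1+(n:ℝ)+1+(i:ℝ) = μ+(n:ℝ)+2+i by ring)]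
    have eB : ∑ m ∈ Finset.Ico j (n+1), ((n.choose m):ℝ) *
          (∏ i ∈ Finset.range (n-m), (0+(m:ℝ)+1+i)) *
          (∏ i ∈ Finset.range m, (0+(1+μ)+(n:ℝ)+1+i)) * ((-1:ℝ)^(j+m) * ((m.choose j):ℝ))
        = ∑ m ∈ Finset.Ico j (n+1), ((n.choose m):ℝ) *
          (∏ i ∈ Finset.range (n-m), ((m:ℝ)+1+i)) *
          (∏ i ∈ Finset.range m, (μ+(n:ℝ)+2+i)) * ((-1:ℝ)^(j+m) * ((m.choose j):ℝ)) := by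
      refine Finset.sum_congr rfl fun m _ => ?_
      rw [Finset.prod_congr rfl (fun i (_ : i ∈ Finset.range m) =>
          show 0+(1+μ)+(n:ℝ)+1+(i:ℝ) = μ+(n:ℝ)+2+i by ring),
        Finset.prod_congr rfl (fun i (_ : i ∈ Finset.range (n-m)) =>
          show 0+(m:ℝ)+1+(i:ℝ) = (m:ℝ)+1+i by ring)]
    rw [eA, eB, SAval μ hμ n j hjn, SBval μ n j hjn, signProd j n μ hjn]
    have hperJ := perJ μ hμ n j hjn
    linear_combination ((1/(n.factorial:ℝ)) * (1/2)^j * (-1:ℝ)^(n-j) * ((n.choose j):ℝ) *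
      (∏ i ∈ Finset.range j, (μ+(n:ℝ)+2+(i:ℝ))) * (1+x)^(j+1)) * hperJ
  · intro N p hdeg hval
    set b : ℕ → ℝ := fun k => (Polynomial.taylor (-1) p).coeff k with hb
    have hdeg' : (Polynomial.taylor (-1) p).natDegree < N+1 := by
      rw [Polynomial.natDegree_taylor]; omega
    have hp : ∀ y : ℝ, p.eval y = ∑ k ∈ Finset.range (N+1), b k * (1+y)^k := by
      intro y
      have h1 : p.eval y = (Polynomial.taylor (-1) p).eval (y+1) := by
        rw [Polynomial.taylor_eval]
        norm_num
      rw [h1, Polynomial.eval_eq_sum_range' hdeg' (y+1)]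
      exact Finset.sum_congr rfl fun k _ => by rw [add_comm y 1]
    have hb0 : b 0 = 0 := by
      rw [hb]
      simp only [Polynomial.taylor_coeff_zero]
      exact hval
    refine ⟨∑ k ∈ Finset.range (N+1), Polynomial.C (b k * cc μ k) * (1 + Polynomial.X)^k,
      ?_, ?_, ?_⟩
    · refine Polynomial.natDegree_sum_le_of_forall_le _ _ fun k hk => ?_
      have hk' : k ≤ N := by have := Finset.mem_range.mp hk; omega
      refine le_trans (Polynomial.natDegree_C_mul_le _ _) (le_trans
        (le_trans (Polynomial.natDegree_pow_le) ?_) hk')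
      have h1 : (1 + Polynomial.X : Polynomial ℝ).natDegree ≤ 1 := by
        refine le_trans (Polynomial.natDegree_add_le _ _) ?_
        simp
      calc k * (1 + Polynomial.X : Polynomial ℝ).natDegree ≤ k * 1 :=
            Nat.mul_le_mul_left k h1
        _ = k := by omega
    · rw [Polynomial.eval_finset_sum]
      rw [Finset.sum_eq_single 0]
      · simp [hb0]
      · intro k _ hk
        obtain ⟨k', rfl⟩ : ∃ k', k = k'+1 := ⟨k-1, by omega⟩
        simp [pow_succ]
      · intro h
        simp at h
    · intro x hx
      have hx1 : -1 < x := hx.1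
      have hu : (fun y => p.eval y) = fun y => ∑ k ∈ Finset.range (N+1), b k * (1+y)^k :=
        funext hp
      rw [hu, fracIntHat_sum μ hμ (Finset.range (N+1)) b (fun k => k) x hx1,
        Polynomial.eval_finset_sum]
      exact Finset.sum_congr rfl fun k _ => by simp [add_comm]
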